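/- \int_0^1 B_2(q) \ln(\sin(\pi q)) dq = -\zeta(3)/(2\pi^2), where B_2(q) = q^2 - q + 1/6. -/

import Mathlib

open Real MeasureTheory Set intervalIntegral


-- trig identity by induction
lemma sin_mul_cos_eq (x : ℝ) (n : ℕ) :
    Real.sin (2*π*n*x) * Real.cos (π*x)
      = Real.sin (π*x) * ∑ j ∈ Finset.range n,
          (Real.cos (2*π*j*x) + Real.cos (2*π*(j+1)*x)) := by
  induction n with
  | zero => simp
  | succ n ih =>
    have h1 : Real.sin (2*π*(n+1)*x) - Real.sin (2*π*n*x)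
        = 2 * Real.sin (π*x) * Real.cos (π*(2*n+1)*x) := by
      rw [Real.sin_sub_sin]; ring_nf
    have h2 : Real.cos (2*π*n*x) + Real.cos (2*π*(n+1)*x)
        = 2 * Real.cos (π*(2*n+1)*x) * Real.cos (π*x) := by
      rw [Real.cos_add_cos]; ring_nf; rw [Real.cos_neg]
    rw [Finset.sum_range_succ]
    push_cast
    push_cast at ih h1 h2
    linear_combination ih + Real.cos (π*x) * h1 - Real.sin (π*x) * h2

lemma abs_sin_nat_mul_le (m : ℕ) (θ : ℝ) : |Real.sin (m * θ)| ≤ m * |Real.sin θ| := by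
  induction m with
  | zero => simp
  | succ m ih =>
    have : Real.sin ((m+1) * θ) = Real.sin (m*θ) * Real.cos θ + Real.cos (m*θ) * Real.sin θ := by
      rw [← Real.sin_add]; ring_nf
    push_cast
    have habs : |Real.sin (((m:ℝ)+1) * θ)| ≤ |Real.sin ((m:ℝ)*θ)| + |Real.sin θ| := by
      rw [this]
      refine (abs_add_le _ _).trans ?_
      rw [abs_mul, abs_mul]
      nlinarith [Real.abs_cos_le_one θ, Real.abs_cos_le_one ((m:ℝ)*θ),
        abs_nonneg (Real.sin ((m:ℝ)*θ)), abs_nonneg (Real.sin θ),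
        abs_nonneg (Real.cos ((m:ℝ)*θ)), abs_nonneg (Real.cos θ)]
    push_cast at ih
    linarith

lemma sin_pi_mul_ge {x : ℝ} (h0 : 0 ≤ x) (h1 : x ≤ 1) :
    2 * (x * (1 - x)) ≤ Real.sin (π * x) := by
  rcases le_or_gt x (1/2) with h | h
  · have := Real.mul_le_sin (x := π * x) (by positivity)
      (by nlinarith [Real.pi_pos])
    have h2 : 2 / π * (π * x) = 2 * x := by field_simp
    nlinarith [this, Real.pi_pos]
  · have h1x0 : (0:ℝ) ≤ 1 - x := by linarith
    have := Real.mul_le_sin (x := π * (1 - x)) (by positivity)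
      (by nlinarith [Real.pi_pos])
    have hs : Real.sin (π * (1 - x)) = Real.sin (π * x) := by
      rw [show π * (1 - x) = π - π * x by ring, Real.sin_pi_sub]
    have h2 : 2 / π * (π * (1-x)) = 2 * (1-x) := by field_simp
    nlinarith [this, Real.pi_pos]


lemma abs_log_le {x : ℝ} (hx : 0 < x) (hx1 : x ≤ 1) :
    |Real.log x| ≤ 2 * x ^ (-(1/2) : ℝ) := by
  have hlog : Real.log x ≤ 0 := Real.log_nonpos hx.le hx1
  rw [abs_of_nonpos hlog]
  have h1 : Real.log (x ^ (-(1/2):ℝ)) = -(1/2) * Real.log x := Real.log_rpow hx _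
  have h2 : Real.log (x ^ (-(1/2):ℝ)) ≤ x ^ (-(1/2):ℝ) - 1 :=
    Real.log_le_sub_one_of_pos (Real.rpow_pos_of_pos hx _)
  have h3 : (0:ℝ) < x ^ (-(1/2):ℝ) := Real.rpow_pos_of_pos hx _
  nlinarith

lemma intInt_abs_log : IntervalIntegrable (fun x => |Real.log x|) volume 0 1 := by
  have hg : IntervalIntegrable (fun x : ℝ => 2 * x ^ (-(1/2):ℝ)) volume 0 1 :=
    (intervalIntegral.intervalIntegrable_rpow' (by norm_num)).const_mul 2
  refine hg.mono_fun ?_ ?_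
  · exact (Real.measurable_log.abs.aestronglyMeasurable)
  · rw [Set.uIoc_of_le (by norm_num : (0:ℝ) ≤ 1)]
    filter_upwards [ae_restrict_mem measurableSet_Ioc] with x hx
    have hx0 : 0 < x := hx.1
    have h := abs_log_le hx.1 hx.2
    rw [Real.norm_eq_abs, Real.norm_eq_abs, abs_abs]
    refine h.trans ?_
    rw [abs_of_nonneg (by positivity)]

lemma intInt_abs_log_one_sub :
    IntervalIntegrable (fun x => |Real.log (1 - x)|) volume 0 1 := by
  have := intInt_abs_log.comp_sub_left 1
  simpa using this.symm

lemma intInt_logsin : IntervalIntegrable (fun x => Real.log (Real.sin (π * x))) volume 0 1 := by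
  refine (intInt_abs_log.add intInt_abs_log_one_sub).mono_fun ?_ ?_
  · exact (Real.measurable_log.comp
      (Real.continuous_sin.measurable.comp (measurable_const_mul π))).aestronglyMeasurable
  · rw [Set.uIoc_of_le (by norm_num : (0:ℝ) ≤ 1)]
    filter_upwards [ae_restrict_mem measurableSet_Ioc] with x hx
    rcases eq_or_lt_of_le hx.2 with h1 | h1
    · simp [h1, Real.sin_pi]
    · have hx0 : 0 < x := hx.1
      have hx1 : x < 1 := h1
      have hlow : 2 * (x * (1-x)) ≤ Real.sin (π * x) := sin_pi_mul_ge hx0.le h1.le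
      have hpos : 0 < 2 * (x * (1-x)) := by nlinarith
      have hspos : 0 < Real.sin (π * x) := lt_of_lt_of_le hpos hlow
      have hup : Real.sin (π * x) ≤ 1 := Real.sin_le_one _
      have hlog1 : Real.log (Real.sin (π*x)) ≤ 0 := Real.log_nonpos hspos.le hup
      have hlog2 : Real.log (2 * (x * (1-x))) ≤ Real.log (Real.sin (π*x)) :=
        Real.log_le_log hpos hlow
      have hsplit : Real.log (2 * (x * (1-x))) = Real.log 2 + Real.log x + Real.log (1-x) := by
        rw [Real.log_mul (by norm_num) (by nlinarith), Real.log_mul (by linarith) (by linarith)]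
        ring
      have hl2 : (0:ℝ) ≤ Real.log 2 := Real.log_nonneg (by norm_num)
      rw [Real.norm_eq_abs, Real.norm_eq_abs, abs_of_nonpos hlog1]
      have := abs_nonneg (Real.log x)
      have := abs_nonneg (Real.log (1-x))
      have := neg_abs_le (Real.log x)
      have := neg_abs_le (Real.log (1-x))
      rw [abs_of_nonneg (by positivity : (0:ℝ) ≤ |Real.log x| + |Real.log (1-x)|)]
      nlinarith [hlog2, hsplit]


noncomputable def Ff (n : ℕ) (x : ℝ) : ℝ := Real.sin (2*π*n*x) * Real.log (Real.sin (π*x))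

lemma continuous_Ff (n : ℕ) : Continuous (Ff n) := by
  rw [continuous_iff_continuousAt]
  intro x
  by_cases hs : Real.sin (π * x) = 0
  · have hbound : ∀ y : ℝ, ‖Ff n y‖ ≤ 2*n * |Real.negMulLog (Real.sin (π*y))| := by
      intro y
      have h1 : |Real.sin (2*π*n*y)| ≤ (2*n : ℕ) * |Real.sin (π*y)| := by
        have := abs_sin_nat_mul_le (2*n) (π*y)
        convert this using 3 <;> push_cast <;> ring
      calc ‖Ff n y‖ = |Real.sin (2*π*n*y)| * |Real.log (Real.sin (π*y))| := by
            rw [Ff, Real.norm_eq_abs, abs_mul]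
        _ ≤ ((2*n:ℕ) * |Real.sin (π*y)|) * |Real.log (Real.sin (π*y))| := by
            gcongr
        _ = 2*n * |Real.negMulLog (Real.sin (π*y))| := by
            rw [Real.negMulLog, neg_mul, abs_neg, abs_mul]
            push_cast; ring
    have hg : Continuous (fun y => 2*(n:ℝ) * |Real.negMulLog (Real.sin (π*y))|) := by
      fun_prop
    have hF0 : Ff n x = 0 := by simp [Ff, hs, Real.log_zero]
    rw [ContinuousAt, hF0]
    have h2 := hg.tendsto x
    have hg0 : 2*(n:ℝ) * |Real.negMulLog (Real.sin (π*x))| = 0 := by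
      simp [hs, Real.negMulLog]
    rw [hg0] at h2
    exact squeeze_zero_norm hbound h2
  · apply ContinuousAt.mul (by fun_prop)
    have hc : ContinuousAt (fun x : ℝ => Real.sin (π*x)) x := by fun_prop
    have := ContinuousAt.comp (g := Real.log) (f := fun x : ℝ => Real.sin (π*x)) (x := x)
      (Real.continuousAt_log hs) hc
    simpa [Function.comp_def] using this

lemma hasDeriv_Ff (n : ℕ) {x : ℝ} (hx : x ∈ Ioo (0:ℝ) 1) :
    HasDerivAt (Ff n)
      (2*π*n * Real.cos (2*π*n*x) * Real.log (Real.sin (π*x))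
        + π * ∑ j ∈ Finset.range n, (Real.cos (2*π*j*x) + Real.cos (2*π*(j+1)*x))) x := by
  have hs : 0 < Real.sin (π * x) :=
    lt_of_lt_of_le (by nlinarith [hx.1, hx.2]) (sin_pi_mul_ge hx.1.le hx.2.le)
  have h1 : HasDerivAt (fun x : ℝ => Real.sin (2*π*n*x)) (Real.cos (2*π*n*x) * (2*π*n)) x := by
    simpa using (HasDerivAt.sin ((hasDerivAt_id x).const_mul (2*π*n)))
  have h2 : HasDerivAt (fun x : ℝ => Real.sin (π*x)) (Real.cos (π*x) * π) x := by
    simpa using (HasDerivAt.sin ((hasDerivAt_id x).const_mul π))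
  have h3 : HasDerivAt (fun x : ℝ => Real.log (Real.sin (π*x)))
      ((Real.cos (π*x) * π) / Real.sin (π*x)) x := h2.log hs.ne'
  have h4 := h1.mul h3
  refine h4.congr_deriv ?_
  have key := sin_mul_cos_eq x n
  have e : Real.sin (2*π*n*x) * (Real.cos (π*x) * π / Real.sin (π*x))
      = π * ∑ j ∈ Finset.range n, (Real.cos (2*π*j*x) + Real.cos (2*π*(j+1)*x)) := by
    rw [mul_div_assoc', div_eq_iff hs.ne']
    linear_combination π * key
  rw [e]; ring

lemma hsin_nat (k : ℕ) : Real.sin (2*π*k) = 0 := by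
  have := Real.sin_nat_mul_pi (2*k)
  push_cast at this
  rw [show 2*π*(k:ℝ) = 2*↑k*π by ring]
  exact this

lemma integral_cos_zero {r : ℝ} (hr : r ≠ 0) (hsin : Real.sin (2*π*r) = 0) :
    (∫ x in (0:ℝ)..1, Real.cos (2*π*r*x)) = 0 := by
  have hπ := Real.pi_ne_zero
  have hc : (2*π*r) ≠ 0 := by
    simp [hr, hπ]
  have := integral_comp_mul_left (a := (0:ℝ)) (b := 1) (fun y => Real.cos y) hc
  simp only [mul_zero, mul_one] at this
  rw [this, integral_cos, Real.sin_zero, hsin]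
  simp

lemma integral_Q (n : ℕ) (hn : 1 ≤ n) :
    (∫ x in (0:ℝ)..1, ∑ j ∈ Finset.range n,
      (Real.cos (2*π*j*x) + Real.cos (2*π*(j+1)*x))) = 1 := by
  have hconts : ∀ c : ℝ, Continuous fun x : ℝ => Real.cos (c*x) := fun c => by fun_prop
  have hii : ∀ c : ℝ, IntervalIntegrable (fun x => Real.cos (c*x)) volume 0 1 :=
    fun c => (hconts c).intervalIntegrable 0 1
  have hsum := intervalIntegral.integral_finset_sum (a := (0:ℝ)) (b := 1) (μ := volume)
    (s := Finset.range n)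
    (f := fun (j:ℕ) (x:ℝ) => Real.cos (2*π*j*x) + Real.cos (2*π*(j+1)*x))
    (fun j _ => ((hii (2*π*j)).add (hii (2*π*(j+1)))))
  rw [hsum]
  have key : ∀ j ∈ Finset.range n,
      (∫ x in (0:ℝ)..1, (Real.cos (2*π*j*x) + Real.cos (2*π*(j+1)*x)))
        = if j = 0 then 1 else 0 := by
    intro j _
    rw [intervalIntegral.integral_add (hii (2*π*j)) (hii (2*π*(j+1)))]
    have hj1 : (∫ x in (0:ℝ)..1, Real.cos (2*π*(j+1)*x)) = 0 := by
      apply integral_cos_zero (by positivity)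
      rw [show ((j:ℝ)+1) = ((j+1 : ℕ):ℝ) by push_cast; ring]
      exact hsin_nat (j+1)
    rw [hj1, add_zero]
    rcases Nat.eq_zero_or_pos j with rfl | hj
    · simp
    · rw [if_neg hj.ne', integral_cos_zero (by positivity : (j:ℝ) ≠ 0) (hsin_nat j)]
  rw [Finset.sum_congr rfl key, Finset.sum_ite_eq' (Finset.range n) 0 (fun _ => (1:ℝ))]
  simp only [Finset.mem_range]
  rw [if_pos (by omega)]

lemma key_integral (n : ℕ) (hn : 1 ≤ n) :
    (∫ x in (0:ℝ)..1, Real.cos (2*π*n*x) * Real.log (Real.sin (π*x))) = -1/(2*n) := by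
  set Q : ℝ → ℝ := fun x => ∑ j ∈ Finset.range n, (Real.cos (2*π*j*x) + Real.cos (2*π*(j+1)*x)) with hQ
  have hQc : Continuous Q := by
    apply continuous_finset_sum
    intro j _
    exact ((Real.continuous_cos.comp (continuous_const.mul continuous_id)).add
      (Real.continuous_cos.comp (continuous_const.mul continuous_id)))
  have hcn : Continuous fun x : ℝ => 2*π*(n:ℝ) * Real.cos (2*π*n*x) := by fun_prop
  have hint1 : IntervalIntegrable
      (fun x => 2*π*n * Real.cos (2*π*n*x) * Real.log (Real.sin (π*x))) volume 0 1 := by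
    have := intInt_logsin.continuousOn_mul hcn.continuousOn
    simpa [mul_assoc] using this
  have hint2 : IntervalIntegrable (fun x => π * Q x) volume 0 1 :=
    (continuous_const.mul hQc).intervalIntegrable 0 1
  have hint := hint1.add hint2
  have hftc := intervalIntegral.integral_eq_sub_of_hasDeriv_right_of_le (by norm_num : (0:ℝ) ≤ 1)
    (continuous_Ff n).continuousOn
    (fun x hx => ((hasDeriv_Ff n hx).hasDerivWithinAt))
    hint
  have hF1 : Ff n 1 = 0 := by simp [Ff, Real.sin_pi, Real.log_zero]
  have hF0 : Ff n 0 = 0 := by simp [Ff]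
  rw [hF1, hF0, sub_zero] at hftc
  rw [intervalIntegral.integral_add hint1 hint2] at hftc
  have e1 : (∫ x in (0:ℝ)..1, 2*π*n * Real.cos (2*π*n*x) * Real.log (Real.sin (π*x)))
      = 2*π*n * ∫ x in (0:ℝ)..1, Real.cos (2*π*n*x) * Real.log (Real.sin (π*x)) := by
    rw [← intervalIntegral.integral_const_mul]
    congr 1; ext x; ring
  have e2 : (∫ x in (0:ℝ)..1, π * Q x) = π := by
    rw [intervalIntegral.integral_const_mul, hQ, integral_Q n hn, mul_one]
  rw [e1, e2] at hftc
  have hπ := Real.pi_pos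
  have hn' : (0:ℝ) < n := by exact_mod_cast hn
  have h2n : (2*π*(n:ℝ)) ≠ 0 := by positivity
  have h5 : π * ((∫ x in (0:ℝ)..1, Real.cos (2*π*n*x) * Real.log (Real.sin (π*x))) * (2*(n:ℝ)) + 1) = 0 := by
    linear_combination hftc
  rcases mul_eq_zero.mp h5 with h | h
  · exact absurd h Real.pi_ne_zero
  · rw [eq_div_iff (by positivity : (2*(n:ℝ)) ≠ 0)]
    linarith


lemma bern2_eval (x : ℝ) :
    (Polynomial.aeval x) (Polynomial.bernoulli 2) = x^2 - x + 1/6 := by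
  simp [Polynomial.bernoulli, Finset.sum_range_succ, bernoulli, bernoulli'_zero, bernoulli'_one,
    bernoulli'_two]
  ring

lemma B2_eq_tsum {x : ℝ} (hx : x ∈ Icc (0:ℝ) 1) :
    x^2 - x + 1/6 = (1/π^2) * ∑' n : ℕ, (1/(n:ℝ)^2 * Real.cos (2*π*n*x)) := by
  have h := hasSum_one_div_nat_pow_mul_cos (k := 1) one_ne_zero hx
  norm_num at h
  rw [bern2_eval] at h
  simp only [one_div]
  rw [h.tsum_eq]
  have hπ : π ≠ 0 := Real.pi_ne_zero
  field_simp

theorem integral_B2_log_sin :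
    (∫ q in (0:ℝ)..1, (q ^ 2 - q + 1 / 6) * Real.log (Real.sin (Real.pi * q)))
      = -(∑' n : ℕ+, 1 / ((n : ℕ) : ℝ) ^ 3) / (2 * Real.pi ^ 2) := by
  set L : ℝ → ℝ := fun q => Real.log (Real.sin (π * q)) with hL
  have hπ : π ≠ 0 := Real.pi_ne_zero
  -- rewrite integrand
  have hrw : Set.EqOn (fun q => (q ^ 2 - q + 1 / 6) * L q)
      (fun q => (1/π^2) * ∑' n : ℕ, (1/(n:ℝ)^2 * Real.cos (2*π*n*q) * L q)) (Set.uIcc 0 1) := by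
    intro q hq
    rw [Set.uIcc_of_le (by norm_num : (0:ℝ) ≤ 1)] at hq
    have hB := B2_eq_tsum hq
    simp only
    rw [hB, mul_assoc]
    congr 1
    rw [← tsum_mul_right]
  rw [intervalIntegral.integral_congr hrw, intervalIntegral.integral_const_mul]
  -- swap integral and sum
  have hLint : IntegrableOn L (Ioc 0 1) volume := intInt_logsin.1
  have hFint : ∀ n : ℕ, Integrable (fun q => 1/(n:ℝ)^2 * Real.cos (2*π*n*q) * L q)
      (volume.restrict (Ioc 0 1)) := by
    intro n
    apply hLint.bdd_mul (c := 1/(n:ℝ)^2)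
    · exact (continuous_const.mul
        (Real.continuous_cos.comp (continuous_const.mul continuous_id))).aestronglyMeasurable
    · refine Filter.Eventually.of_forall (fun q => ?_)
      rw [Real.norm_eq_abs, abs_mul]
      calc |1/(n:ℝ)^2| * |Real.cos (2*π*n*q)| ≤ |1/(n:ℝ)^2| * 1 := by
            gcongr; exact Real.abs_cos_le_one _
        _ = 1/(n:ℝ)^2 := by rw [mul_one, abs_of_nonneg (by positivity)]
  have hC : (0:ℝ) ≤ ∫ q in Ioc (0:ℝ) 1, ‖L q‖ := integral_nonneg (fun q => norm_nonneg _)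
  have hsummable : Summable fun n : ℕ => ∫ q in Ioc (0:ℝ) 1, ‖1/(n:ℝ)^2 * Real.cos (2*π*n*q) * L q‖ := by
    refine Summable.of_nonneg_of_le (fun n => integral_nonneg (fun q => norm_nonneg _))
      (fun n => ?_)
      ((summable_one_div_nat_pow.mpr one_lt_two).mul_right (∫ q in Ioc (0:ℝ) 1, ‖L q‖))
    · rw [← MeasureTheory.integral_const_mul]
      apply integral_mono (hFint n).norm ((hLint.norm).const_mul _)
      intro q
      simp only [Real.norm_eq_abs, abs_mul]
      calc |1/(n:ℝ)^2| * |Real.cos (2*π*n*q)| * |L q|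
          ≤ |1/(n:ℝ)^2| * 1 * |L q| := by gcongr; exact Real.abs_cos_le_one _
        _ = 1/(n:ℝ)^2 * |L q| := by rw [mul_one, abs_of_nonneg (by positivity : (0:ℝ) ≤ 1/(n:ℝ)^2)]
  have hswap := (integral_tsum_of_summable_integral_norm hFint hsummable).symm
  rw [intervalIntegral.integral_of_le (by norm_num : (0:ℝ) ≤ 1), hswap]
  -- evaluate each term
  have hterm : ∀ n : ℕ, (∫ q in Ioc (0:ℝ) 1, 1/(n:ℝ)^2 * Real.cos (2*π*n*q) * L q)
      = -(1/2) * (1/(n:ℝ)^3) := by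
    intro n
    rw [← intervalIntegral.integral_of_le (by norm_num : (0:ℝ) ≤ 1)]
    rcases Nat.eq_zero_or_pos n with rfl | hn
    · simp
    · have e : (∫ q in (0:ℝ)..1, 1/(n:ℝ)^2 * Real.cos (2*π*n*q) * L q)
          = 1/(n:ℝ)^2 * ∫ q in (0:ℝ)..1, Real.cos (2*π*n*q) * L q := by
        rw [← intervalIntegral.integral_const_mul]
        congr 1
        ext q
        ring
      rw [e, key_integral n hn]
      have hn' : (0:ℝ) < n := by exact_mod_cast hn
      field_simp
  rw [tsum_congr hterm, tsum_mul_left]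
  -- relate pnat sum to nat sum
  have hpnat : (∑' n : ℕ+, 1 / ((n : ℕ) : ℝ) ^ 3) = ∑' n : ℕ, 1/(n:ℝ)^3 := by
    refine Function.Injective.tsum_eq (g := fun n : ℕ+ => (n:ℕ))
      (f := fun m : ℕ => 1/(m:ℝ)^3) (fun a b h => PNat.coe_injective h) ?_
    intro x hx
    rcases Nat.eq_zero_or_pos x with rfl | hxpos
    · simp [Function.mem_support] at hx
    · exact ⟨⟨x, hxpos⟩, rfl⟩
  rw [hpnat]
  have hπ2 : (π:ℝ)^2 ≠ 0 := pow_ne_zero 2 hπ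
  generalize (∑' (n:ℕ), 1/(n:ℝ)^3) = S
  rw [eq_div_iff (by positivity : (2*π^2) ≠ 0)]
  linear_combination (-S) * mul_inv_cancel₀ hπ2
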